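/- If Z(q) = q^{−C/24}·Σ_{n≥0} aₙqⁿ with a₀ = 1 is a formal power series solution of [θ² + 2E₂(q)θ − (5/4)C(C+4)E₄(q)]Z = 0 with θ = q d/dq, E₂ = −1/12 + 2Σ_{n≥1} σ₁(n)qⁿ, E₄ = 1/720 + (1/3)Σ_{n≥1} σ₃(n)qⁿ, then a₁ = C(5C+22)/(10−C), provided C ≠ 10. -/

import Mathlib

/-- Coefficients of the Eisenstein series `E₂ = -1/12 + 2∑σ₁(n)qⁿ`. -/
def e2 (n : ℕ) : ℚ :=
  if n = 0 then -1/12 else 2 * ∑ d ∈ n.divisors, (d : ℚ)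

/-- Coefficients of the Eisenstein series `E₄ = 1/720 + (1/3)∑σ₃(n)qⁿ`. -/
def e4 (n : ℕ) : ℚ :=
  if n = 0 then 1/720 else (1/3) * ∑ d ∈ n.divisors, (d : ℚ)^3

/-- The coefficient equations for `Z(q) = q^{-C/24} ∑ aₙ qⁿ` to solve the ODE
`[θ² + 2E₂θ - (5/4)C(C+4)E₄] Z = 0` with `θ = q d/dq`: for every `n`,
`(n - C/24)² aₙ + 2 ∑_{k≤n} e₂(k)(n-k-C/24)a_{n-k} - (5/4)C(C+4) ∑_{k≤n} e₄(k)a_{n-k} = 0`. -/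
def SolvesODE (C : ℚ) (a : ℕ → ℚ) : Prop :=
  ∀ n : ℕ,
    ((n : ℚ) - C/24)^2 * a n
      + 2 * ∑ k ∈ Finset.range (n + 1), e2 k * (((n : ℚ) - (k : ℚ)) - C/24) * a (n - k)
      - (5/4) * C * (C + 4) * ∑ k ∈ Finset.range (n + 1), e4 k * a (n - k) = 0

/-- If `Z(q) = q^{-C/24} ∑ aₙ qⁿ` with `a₀ = 1` solves the ODE, then
`a₁ = C(5C+22)/(10-C)`, provided `C ≠ 10`. -/
theorem a1_deligne_formula (C : ℚ) (hC : C ≠ 10) (a : ℕ → ℚ)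
    (h0 : a 0 = 1) (h : SolvesODE C a) :
    a 1 = C * (5 * C + 22) / (10 - C) := by
  have h1 := h 1
  simp only [SolvesODE, Finset.sum_range_succ, Finset.sum_range_one] at h1
  norm_num [e2, e4, Nat.divisors_one, h0] at h1
  have h10 : (10 : ℚ) - C ≠ 0 := fun hc => hC (by linarith)
  field_simp
  linear_combination 12 * h1
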